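/- Let q : ℝ → ℝ be continuous on [0,1], let α, β, γ ∈ ℝ with sin(β − γ) ≠ 0, and let λ ∈ ℝ. Suppose u, v : ℝ → ℝ are twice continuously differentiable, neither identically zero on [0,1], both satisfying −w'' + q w = λ w on [0,1], and u(0)cos α + u'(0)sin α = 0, u(1)cos β + u'(1)sin β = 0, v(0)cos α + v'(0)sin α = 0, v(1)cos γ + v'(1)sin γ = 0. Then a contradiction follows; i.e., the two Sturm–Liouville boundary value problems with boundary conditions (α,β) and (α,γ) have no common eigenvalue. -/

import Mathlib

open Set

/-- cross product of two 2D vectors orthogonal to a common nonzero vector vanishes -/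
lemma cross_zero_of_common_orth (a1 a2 b1 b2 n1 n2 : ℝ)
    (ha : a1 * n1 + a2 * n2 = 0) (hb : b1 * n1 + b2 * n2 = 0)
    (hn : ¬(n1 = 0 ∧ n2 = 0)) : a1 * b2 - a2 * b1 = 0 := by
  rcases not_and_or.mp hn with h | h
  · have h1 : n1 * (a1 * b2 - a2 * b1) = 0 := by linear_combination b2 * ha - a2 * hb
    rcases mul_eq_zero.mp h1 with h' | h' <;> tauto
  · have h1 : n2 * (a1 * b2 - a2 * b1) = 0 := by linear_combination a1 * hb - b1 * ha
    rcases mul_eq_zero.mp h1 with h' | h' <;> tauto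

/-- A solution of the SL equation with `(w 1, w' 1) = 0` is identically zero on `[0,1]`. -/
lemma sl_vanish (q : ℝ → ℝ) (hq : ContinuousOn q (Icc (0:ℝ) 1)) (lam : ℝ)
    (w w' w'' : ℝ → ℝ)
    (hw : ∀ x ∈ Icc (0:ℝ) 1, HasDerivAt w (w' x) x ∧ HasDerivAt w' (w'' x) x)
    (heq : ∀ x ∈ Icc (0:ℝ) 1, -w'' x + q x * w x = lam * w x)
    (h1 : w 1 = 0) (h1' : w' 1 = 0) : ∀ x ∈ Icc (0:ℝ) 1, w x = 0 := by
  -- bound on q - lam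
  obtain ⟨M, hM⟩ : ∃ M, ∀ t ∈ Icc (0:ℝ) 1, |q t - lam| ≤ M := by
    obtain ⟨M, hM⟩ := (isCompact_Icc.bddAbove_image
      ((hq.sub continuousOn_const).abs)).imp (fun M hM => hM)
    exact ⟨M, fun t ht => hM ⟨t, ht, rfl⟩⟩
  have hM0 : 0 ≤ M := le_trans (abs_nonneg _) (hM 0 ⟨le_refl _, by norm_num⟩)
  set K : NNReal := ⟨max 1 M, le_trans zero_le_one (le_max_left _ _)⟩ with hK
  set A : ℝ → ℝ := fun t => if t ∈ Icc (0:ℝ) 1 then q t - lam else 0 with hA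
  have hAbd : ∀ t, |A t| ≤ M := by
    intro t
    simp only [hA]
    by_cases h : t ∈ Icc (0:ℝ) 1
    · rw [if_pos h]; exact hM t h
    · rw [if_neg h]; simpa using hM0
  set V : ℝ → ℝ × ℝ → ℝ × ℝ := fun t x => (x.2, A t * x.1) with hV
  have hKc : (K : ℝ) = max 1 M := rfl
  have hlip : ∀ t, LipschitzOnWith K (V t) univ := by
    intro t
    apply LipschitzOnWith.of_dist_le_mul
    intro x _ y _
    simp only [hV, Prod.dist_eq, Real.dist_eq]
    rw [hKc, max_le_iff]
    have hd0 : (0:ℝ) ≤ max |x.1 - y.1| |x.2 - y.2| :=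
      le_trans (abs_nonneg _) (le_max_left _ _)
    constructor
    · calc |x.2 - y.2| ≤ max |x.1 - y.1| |x.2 - y.2| := le_max_right _ _
        _ = 1 * max |x.1 - y.1| |x.2 - y.2| := (one_mul _).symm
        _ ≤ max 1 M * max |x.1 - y.1| |x.2 - y.2| :=
            mul_le_mul_of_nonneg_right (le_max_left _ _) hd0
    · have heq2 : |A t * x.1 - A t * y.1| = |A t| * |x.1 - y.1| := by
        rw [← abs_mul]; ring_nf
      rw [heq2]
      calc |A t| * |x.1 - y.1| ≤ M * max |x.1 - y.1| |x.2 - y.2| :=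
            mul_le_mul (hAbd t) (le_max_left _ _) (abs_nonneg _) hM0
        _ ≤ max 1 M * max |x.1 - y.1| |x.2 - y.2| :=
            mul_le_mul_of_nonneg_right (le_max_right _ _) hd0
  set f : ℝ → ℝ × ℝ := fun t => (w t, w' t) with hf
  have key : EqOn f (fun _ => (0,0)) (Icc (0:ℝ) 1) := by
    apply ODE_solution_unique_of_mem_Icc_left (fun t _ => hlip t)
    · intro x hx
      exact (((hw x hx).1.continuousAt.prodMk (hw x hx).2.continuousAt)).continuousWithinAt
    · intro t ht
      have ht' : t ∈ Icc (0:ℝ) 1 := ⟨le_of_lt ht.1, ht.2⟩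
      have hd : HasDerivAt f (w' t, w'' t) t := (hw t ht').1.prodMk (hw t ht').2
      have hw2 : A t * w t = w'' t := by
        simp only [hA, if_pos ht']; linear_combination heq t ht'
      have : V t (f t) = (w' t, w'' t) := by
        simp only [hV, hf]
        rw [hw2]
      rw [this]
      exact hd.hasDerivWithinAt
    · intro t _; trivial
    · exact continuousOn_const
    · intro t ht
      simpa [hV, Prod.mk_zero_zero] using (hasDerivWithinAt_const t (Iic t) (((0:ℝ),(0:ℝ)) : ℝ × ℝ))
    · intro t _; trivial
    · simp [hf, h1, h1']
  intro x hx
  have := key hx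
  simpa [hf] using congrArg Prod.fst this

/-- If `sin(β − γ) ≠ 0`, the Sturm–Liouville boundary value problems with boundary
conditions `(α,β)` and `(α,γ)` have no common eigenvalue: the existence of nontrivial
`C²` solutions `u` (with conditions `(α,β)`) and `v` (with conditions `(α,γ)`) of
`−w'' + q w = λ w` on `[0,1]` leads to a contradiction. -/
theorem no_common_eigenvalue
    (q : ℝ → ℝ) (hq : ContinuousOn q (Set.Icc (0:ℝ) 1))
    (α β γ : ℝ) (hβγ : Real.sin (β - γ) ≠ 0)
    (lam : ℝ)
    (u u' u'' v v' v'' : ℝ → ℝ)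
    (hu : ∀ x ∈ Set.Icc (0:ℝ) 1, HasDerivAt u (u' x) x ∧ HasDerivAt u' (u'' x) x)
    (hu'' : ContinuousOn u'' (Set.Icc (0:ℝ) 1))
    (hv : ∀ x ∈ Set.Icc (0:ℝ) 1, HasDerivAt v (v' x) x ∧ HasDerivAt v' (v'' x) x)
    (hv'' : ContinuousOn v'' (Set.Icc (0:ℝ) 1))
    (hune : ∃ x ∈ Set.Icc (0:ℝ) 1, u x ≠ 0)
    (hvne : ∃ x ∈ Set.Icc (0:ℝ) 1, v x ≠ 0)
    (hueq : ∀ x ∈ Set.Icc (0:ℝ) 1, -u'' x + q x * u x = lam * u x)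
    (hveq : ∀ x ∈ Set.Icc (0:ℝ) 1, -v'' x + q x * v x = lam * v x)
    (hubc0 : u 0 * Real.cos α + u' 0 * Real.sin α = 0)
    (hubc1 : u 1 * Real.cos β + u' 1 * Real.sin β = 0)
    (hvbc0 : v 0 * Real.cos α + v' 0 * Real.sin α = 0)
    (hvbc1 : v 1 * Real.cos γ + v' 1 * Real.sin γ = 0) :
    False := by
  -- the endpoint vectors are nonzero
  have h1mem : (1:ℝ) ∈ Icc (0:ℝ) 1 := ⟨by norm_num, le_refl _⟩
  have hu1 : ¬(u 1 = 0 ∧ u' 1 = 0) := by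
    rintro ⟨h1, h2⟩
    obtain ⟨x, hx, hxne⟩ := hune
    exact hxne (sl_vanish q hq lam u u' u'' hu hueq h1 h2 x hx)
  have hv1 : ¬(v 1 = 0 ∧ v' 1 = 0) := by
    rintro ⟨h1, h2⟩
    obtain ⟨x, hx, hxne⟩ := hvne
    exact hxne (sl_vanish q hq lam v v' v'' hv hveq h1 h2 x hx)
  -- the Wronskian
  set W : ℝ → ℝ := fun t => u t * v' t - u' t * v t with hW
  have hWd : ∀ x ∈ Icc (0:ℝ) 1, HasDerivAt W 0 x := by
    intro x hx
    have hd : HasDerivAt W ((u' x * v' x + u x * v'' x) - (u'' x * v x + u' x * v' x)) x :=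
      ((hu x hx).1.mul (hv x hx).2).sub ((hu x hx).2.mul (hv x hx).1)
    have h0 : (u' x * v' x + u x * v'' x) - (u'' x * v x + u' x * v' x) = 0 := by
      linear_combination v x * hueq x hx - u x * hveq x hx
    exact h0 ▸ hd
  have hWcont : ContinuousOn W (Icc (0:ℝ) 1) :=
    fun x hx => ((hWd x hx).continuousAt).continuousWithinAt
  have hWconst := constant_of_has_deriv_right_zero hWcont
    (fun x hx => (hWd x (Ico_subset_Icc_self hx)).hasDerivWithinAt)
  -- W 0 = 0
  have hnα : ¬(Real.cos α = 0 ∧ Real.sin α = 0) := by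
    rintro ⟨h1, h2⟩
    have := Real.sin_sq_add_cos_sq α
    rw [h1, h2] at this; norm_num at this
  have hW0 : W 0 = 0 :=
    cross_zero_of_common_orth (u 0) (u' 0) (v 0) (v' 0) (Real.cos α) (Real.sin α)
      hubc0 hvbc0 hnα
  have hW1 : u 1 * v' 1 - u' 1 * v 1 = 0 := by
    have := hWconst 1 h1mem
    rw [hW0] at this
    exact this
  -- u satisfies the γ-condition at 1
  have huγ : u 1 * Real.cos γ + u' 1 * Real.sin γ = 0 := by
    have hcross := cross_zero_of_common_orth (Real.cos γ) (Real.sin γ) (u' 1) (-(u 1))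
      (v 1) (v' 1) (by linarith) (by linarith) hv1
    linarith
  -- both (cos β, sin β) and (cos γ, sin γ) are orthogonal to (u 1, u' 1) ≠ 0
  have hfin := cross_zero_of_common_orth (Real.cos β) (Real.sin β) (Real.cos γ) (Real.sin γ)
    (u 1) (u' 1) (by linarith) (by linarith) hu1
  apply hβγ
  rw [Real.sin_sub]
  linarith
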